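/- arXiv:1205.0368 — 3 statements merged into one kernel-verified Lean document; each statement's English description precedes it below -/
import Mathlib

section
/- Fix ξ ∈ ℝ³, positive real parameters ε, δ and a time step Δt, and set H = εδ(α·ξ) + β and θ = Δt √(1+ε²δ²|ξ|²)/(εδ²). Then the matrix exponential of the Fourier-mode generator of the free-Dirac step of the splitting scheme is exp(−(iΔt/(εδ²)) • H) = cos(θ) • I₄ − i (sin(θ)/√(1+ε²δ²|ξ|²)) • H. -/
open Matrix Complex

/-- The three Dirac alpha matrices `α^k = [[0, σ^k],[σ^k, 0]]`. -/
noncomputable def alphaM : Fin 3 → Matrix (Fin 4) (Fin 4) ℂ :=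
  ![!![0,0,0,1; 0,0,1,0; 0,1,0,0; 1,0,0,0],
    !![0,0,0,-Complex.I; 0,0,Complex.I,0; 0,-Complex.I,0,0; Complex.I,0,0,0],
    !![0,0,1,0; 0,0,0,-1; 1,0,0,0; 0,-1,0,0]]

/-- The Dirac beta matrix `β = diag(I₂, −I₂)`. -/
noncomputable def betaM : Matrix (Fin 4) (Fin 4) ℂ :=
  !![1,0,0,0; 0,1,0,0; 0,0,-1,0; 0,0,0,-1]

/-- `α · a = Σ_k aₖ α^k` for a real 3-vector `a`. -/
noncomputable def alphaDot (a : Fin 3 → ℝ) : Matrix (Fin 4) (Fin 4) ℂ :=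
  ∑ k, (a k : ℂ) • alphaM k

/-- Squared Euclidean norm of a real 3-vector. -/
noncomputable def normSq3 (ξ : Fin 3 → ℝ) : ℝ := ∑ k, ξ k ^ 2

/-- The symbol of the free Dirac operator, `D₀(ξ) = α·ξ + β`. -/
noncomputable def D0 (ξ : Fin 3 → ℝ) : Matrix (Fin 4) (Fin 4) ℂ := alphaDot ξ + betaM

/-- `λ₀(ξ) = √(1+|ξ|²)`. -/
noncomputable def lam0 (ξ : Fin 3 → ℝ) : ℝ := Real.sqrt (1 + normSq3 ξ)

/-- Positive-energy projector symbol `Π₀⁺(ξ)`. -/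
noncomputable def Pi0plus (ξ : Fin 3 → ℝ) : Matrix (Fin 4) (Fin 4) ℂ :=
  (1/2 : ℂ) • (1 + ((lam0 ξ : ℝ) : ℂ)⁻¹ • D0 ξ)

/-- Negative-energy projector symbol `Π₀⁻(ξ)`. -/
noncomputable def Pi0minus (ξ : Fin 3 → ℝ) : Matrix (Fin 4) (Fin 4) ℂ :=
  (1/2 : ℂ) • (1 - ((lam0 ξ : ℝ) : ℂ)⁻¹ • D0 ξ)

/-- The generator matrix `H = εδ(α·ξ) + β` of the free-Dirac step at frequency `ξ`. -/
noncomputable def freeStepH (ξ : Fin 3 → ℝ) (ε δ : ℝ) : Matrix (Fin 4) (Fin 4) ℂ :=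
  ((ε * δ : ℝ) : ℂ) • alphaDot ξ + betaM

/-- The phase `θ = Δt √(1+ε²δ²|ξ|²)/(εδ²)` of the free-Dirac step. -/
noncomputable def freeStepTheta (ξ : Fin 3 → ℝ) (ε δ Δt : ℝ) : ℝ :=
  Δt * Real.sqrt (1 + ε ^ 2 * δ ^ 2 * normSq3 ξ) / (ε * δ ^ 2)

lemma euler (A : Matrix (Fin 4) (Fin 4) ℂ) (hA : A ^ 2 = 1) (θ : ℂ) :
    NormedSpace.exp ((-(Complex.I * θ)) • A) =
      Complex.cos θ • (1 : Matrix (Fin 4) (Fin 4) ℂ) - (Complex.I * Complex.sin θ) • A := by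
  rw [NormedSpace.exp_eq_tsum (𝕂 := ℂ)]
  refine HasSum.tsum_eq ?_
  rw [sub_eq_add_neg, ← neg_smul]
  have h2 : ((-(Complex.I * θ)) ^ 2) = -θ ^ 2 := by
    rw [neg_sq, mul_pow, Complex.I_sq]; ring
  refine HasSum.even_add_odd ?_ ?_
  · have h := (Complex.hasSum_cos θ).smul_const (1 : Matrix (Fin 4) (Fin 4) ℂ)
    convert h using 2 with k
    · rfl
    rw [smul_pow, pow_mul, pow_mul, hA, one_pow, smul_smul]
    congr 1
    rw [h2, neg_pow]
    field_simp
    try ring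
  · have h := ((Complex.hasSum_sin θ).mul_left (-Complex.I)).smul_const A
    convert h using 2 with k
    · rfl
    · rw [smul_pow, pow_succ A, pow_mul A, hA, one_pow, one_mul,
        pow_succ (-(Complex.I*θ)), pow_mul, h2, smul_smul]
      congr 1
      rw [neg_pow]
      field_simp
      try ring
    · rw [← neg_mul]

set_option maxHeartbeats 1000000 in
lemma Hexplicit (ξ : Fin 3 → ℝ) (ε δ : ℝ) :
    freeStepH ξ ε δ =
      !![1, 0, ((ε*δ*ξ 2 : ℝ) : ℂ), ((ε*δ*ξ 0 : ℝ) : ℂ) - ((ε*δ*ξ 1 : ℝ) : ℂ)*Complex.I;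
         0, 1, ((ε*δ*ξ 0 : ℝ) : ℂ) + ((ε*δ*ξ 1 : ℝ) : ℂ)*Complex.I, -((ε*δ*ξ 2 : ℝ) : ℂ);
         ((ε*δ*ξ 2 : ℝ) : ℂ), ((ε*δ*ξ 0 : ℝ) : ℂ) - ((ε*δ*ξ 1 : ℝ) : ℂ)*Complex.I, -1, 0;
         ((ε*δ*ξ 0 : ℝ) : ℂ) + ((ε*δ*ξ 1 : ℝ) : ℂ)*Complex.I, -((ε*δ*ξ 2 : ℝ) : ℂ), 0, -1] := by
  ext i j
  fin_cases i <;> fin_cases j <;>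
    simp [freeStepH, alphaDot, alphaM, betaM, Fin.sum_univ_three, Matrix.vecHead, Matrix.vecTail] <;> push_cast <;> ring

set_option maxHeartbeats 1000000 in
lemma Hsq (ξ : Fin 3 → ℝ) (ε δ : ℝ) :
    (freeStepH ξ ε δ) ^ 2 =
      (((1 + ε ^ 2 * δ ^ 2 * normSq3 ξ : ℝ) : ℂ)) • (1 : Matrix (Fin 4) (Fin 4) ℂ) := by
  rw [Hexplicit, pow_two]
  ext i j
  fin_cases i <;> fin_cases j <;>
    simp [Matrix.mul_apply, Fin.sum_univ_four, Matrix.one_apply, normSq3,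
      Fin.sum_univ_three] <;> push_cast <;> ring_nf <;> simp [Complex.I_sq] <;> ring

/-- Explicit formula for the matrix exponential of the Fourier-mode generator of the
free-Dirac step of the time-splitting scheme:
`exp(−(iΔt/(εδ²))•H) = cos θ • I₄ − i (sin θ/√(1+ε²δ²|ξ|²)) • H`. -/
theorem exp_freeDirac_step
    (ξ : Fin 3 → ℝ) (ε δ Δt : ℝ) (hε : 0 < ε) (hδ : 0 < δ) (hΔt : 0 < Δt) :
    NormedSpace.exp ((-(Complex.I * (Δt : ℂ) / ((ε * δ ^ 2 : ℝ) : ℂ))) • freeStepH ξ ε δ) =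
      ((Real.cos (freeStepTheta ξ ε δ Δt) : ℝ) : ℂ) • (1 : Matrix (Fin 4) (Fin 4) ℂ) -
        (Complex.I * ((Real.sin (freeStepTheta ξ ε δ Δt) /
          Real.sqrt (1 + ε ^ 2 * δ ^ 2 * normSq3 ξ) : ℝ) : ℂ)) • freeStepH ξ ε δ := by
  set L : ℝ := Real.sqrt (1 + ε ^ 2 * δ ^ 2 * normSq3 ξ) with hLdef
  have hpos : (0:ℝ) < 1 + ε ^ 2 * δ ^ 2 * normSq3 ξ := by
    have h0 : (0:ℝ) ≤ normSq3 ξ := Finset.sum_nonneg fun k _ => sq_nonneg _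
    positivity
  have hL : 0 < L := Real.sqrt_pos.mpr hpos
  have hLsq : L ^ 2 = 1 + ε ^ 2 * δ ^ 2 * normSq3 ξ := Real.sq_sqrt hpos.le
  have hLne : ((L:ℝ):ℂ) ≠ 0 := by exact_mod_cast hL.ne'
  have hεδ : ((ε * δ ^ 2 : ℝ):ℂ) ≠ 0 := by
    have : (ε * δ ^ 2 : ℝ) ≠ 0 := by positivity
    exact_mod_cast this
  set A : Matrix (Fin 4) (Fin 4) ℂ := ((L:ℝ):ℂ)⁻¹ • freeStepH ξ ε δ with hAdef
  have hA : A ^ 2 = 1 := by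
    rw [hAdef, smul_pow, Hsq, smul_smul, ← hLsq]
    push_cast
    rw [inv_pow, inv_mul_cancel₀ (by exact_mod_cast pow_ne_zero 2 hL.ne'), one_smul]
  set θ : ℝ := freeStepTheta ξ ε δ Δt with hθdef
  have hθ : θ = Δt * L / (ε * δ ^ 2) := rfl
  have hsc : (-(Complex.I * (Δt : ℂ) / ((ε * δ ^ 2 : ℝ) : ℂ))) • freeStepH ξ ε δ
      = (-(Complex.I * ((θ:ℝ):ℂ))) • A := by
    rw [hAdef, smul_smul]
    congr 1
    rw [hθ]
    push_cast
    field_simp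
  rw [hsc, euler A hA ((θ:ℝ):ℂ)]
  congr 1
  · rw [Complex.ofReal_cos]
  · rw [hAdef, smul_smul]
    congr 1
    push_cast [Complex.ofReal_sin]
    field_simp
end

section
/- Let a ∈ ℝ³ with a ≠ 0, let V ∈ ℝ and t ∈ ℝ. Then the matrix exponential of the generator of the potential step of the splitting scheme satisfies exp((i t) • (α·a − V • I₄)) = e^{−iVt} • ( cos(|a| t) • I₄ + i (sin(|a| t)/|a|) • (α·a) ), and this matrix is unitary. -/
open Matrix Complex

lemma exp_smul_sq_one {B : Matrix (Fin 4) (Fin 4) ℂ} (hB : B * B = 1) (u : ℂ) :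
    NormedSpace.exp (u • B) = Complex.cosh u • 1 + Complex.sinh u • B := by
  letI : SeminormedRing (Matrix (Fin 4) (Fin 4) ℂ) := Matrix.linftyOpSemiNormedRing
  letI : NormedRing (Matrix (Fin 4) (Fin 4) ℂ) := Matrix.linftyOpNormedRing
  letI : NormedAlgebra ℂ (Matrix (Fin 4) (Fin 4) ℂ) := Matrix.linftyOpNormedAlgebra
  set P : Matrix (Fin 4) (Fin 4) ℂ := (2:ℂ)⁻¹ • (1 + B) with hP
  set Q : Matrix (Fin 4) (Fin 4) ℂ := (2:ℂ)⁻¹ • (1 - B) with hQ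
  have expand : ∀ x y : Matrix (Fin 4) (Fin 4) ℂ, True := fun _ _ => trivial
  have hPP : P * P = P := by
    simp only [hP, smul_mul_assoc, mul_smul_comm, add_mul, mul_add, one_mul, mul_one, hB]
    module
  have hQQ : Q * Q = Q := by
    simp only [hQ, smul_mul_assoc, mul_smul_comm, sub_mul, mul_sub, one_mul, mul_one, hB]
    module
  have hPQ : P * Q = 0 := by
    simp only [hP, hQ, smul_mul_assoc, mul_smul_comm, add_mul, sub_mul, mul_add, mul_sub,
      one_mul, mul_one, hB]
    module
  have hQP : Q * P = 0 := by
    simp only [hP, hQ, smul_mul_assoc, mul_smul_comm, add_mul, sub_mul, mul_add, mul_sub,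
      one_mul, mul_one, hB]
    module
  let φ : ℂ × ℂ →+* Matrix (Fin 4) (Fin 4) ℂ :=
  { toFun := fun x => x.1 • P + x.2 • Q
    map_one' := by simp only [Prod.fst_one, Prod.snd_one, one_smul]; rw [hP, hQ]; module
    map_mul' := fun x y => by
      simp only [Prod.fst_mul, Prod.snd_mul]
      simp only [add_mul, mul_add, smul_mul_assoc, mul_smul_comm, hPP, hQQ, hPQ, hQP,
        smul_zero, add_zero, zero_add, smul_smul]
      module
    map_zero' := by simp
    map_add' := fun x y => by
      simp only [Prod.fst_add, Prod.snd_add, add_smul]; abel }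
  have hφ : Continuous φ := by
    show Continuous fun x : ℂ × ℂ => x.1 • P + x.2 • Q
    exact (continuous_fst.smul continuous_const).add (continuous_snd.smul continuous_const)
  have key := NormedSpace.map_exp φ hφ (u, -u)
  have hprod : NormedSpace.exp ((u, -u) : ℂ × ℂ) =
      (Complex.exp u, Complex.exp (-u)) := by
    rw [Complex.exp_eq_exp_ℂ]
    exact Prod.ext (Prod.fst_exp _) (Prod.snd_exp _)
  have harg : φ (u, -u) = u • B := by
    show u • P + (-u) • Q = u • B
    rw [hP, hQ]; module
  rw [hprod, harg] at key
  have : φ (Complex.exp u, Complex.exp (-u)) =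
      Complex.cosh u • 1 + Complex.sinh u • B := by
    show Complex.exp u • P + Complex.exp (-u) • Q = _
    rw [hP, hQ, Complex.cosh, Complex.sinh]
    match_scalars <;> ring
  rw [this] at key
  exact key.symm

lemma alphaDot_sq' (a : Fin 3 → ℝ) :
    alphaDot a * alphaDot a = ((normSq3 a : ℝ) : ℂ) • 1 := by
  ext i j
  fin_cases i <;> fin_cases j <;>
    simp [alphaDot, alphaM, Matrix.mul_apply, Fin.sum_univ_succ, normSq3,
      Matrix.one_apply] <;> ring_nf <;> simp [Complex.I_sq] <;> ring

lemma alphaM_herm' (k : Fin 3) : (alphaM k)ᴴ = alphaM k := by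
  fin_cases k <;> ext i j <;> fin_cases i <;> fin_cases j <;>
    simp [alphaM, Matrix.conjTranspose_apply, Matrix.vecHead, Matrix.vecTail]

lemma alphaDot_herm' (a : Fin 3 → ℝ) : (alphaDot a)ᴴ = alphaDot a := by
  unfold alphaDot
  rw [Matrix.conjTranspose_sum]
  refine Finset.sum_congr rfl fun k _ => ?_
  rw [Matrix.conjTranspose_smul, alphaM_herm', Complex.star_def, Complex.conj_ofReal]


/-- The matrix exponential of the generator of the potential step of the splitting
scheme: for `a ≠ 0`, `exp((it)•(α·a − V I₄)) =
e^{−iVt} • (cos(|a|t) • I₄ + i (sin(|a|t)/|a|) • (α·a))`, and this matrix is unitary. -/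
theorem exp_potential_step_and_unitary
    (a : Fin 3 → ℝ) (ha : a ≠ 0) (V t : ℝ) :
    NormedSpace.exp ((Complex.I * (t : ℂ)) •
        (alphaDot a - (V : ℂ) • (1 : Matrix (Fin 4) (Fin 4) ℂ))) =
      Complex.exp (-(Complex.I) * (V : ℂ) * (t : ℂ)) •
        (((Real.cos (Real.sqrt (normSq3 a) * t) : ℝ) : ℂ) • (1 : Matrix (Fin 4) (Fin 4) ℂ) +
          (Complex.I * ((Real.sin (Real.sqrt (normSq3 a) * t) /
            Real.sqrt (normSq3 a) : ℝ) : ℂ)) • alphaDot a) ∧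
    NormedSpace.exp ((Complex.I * (t : ℂ)) •
        (alphaDot a - (V : ℂ) • (1 : Matrix (Fin 4) (Fin 4) ℂ)))
      ∈ Matrix.unitaryGroup (Fin 4) ℂ := by
  letI : SeminormedRing (Matrix (Fin 4) (Fin 4) ℂ) := Matrix.linftyOpSemiNormedRing
  letI : NormedRing (Matrix (Fin 4) (Fin 4) ℂ) := Matrix.linftyOpNormedRing
  letI : NormedAlgebra ℂ (Matrix (Fin 4) (Fin 4) ℂ) := Matrix.linftyOpNormedAlgebra
  set A := alphaDot a with hA
  set r := Real.sqrt (normSq3 a) with hr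
  have hnsnn : 0 ≤ normSq3 a := Finset.sum_nonneg fun k _ => sq_nonneg _
  have hnspos : 0 < normSq3 a := by
    obtain ⟨k, hk⟩ := Function.ne_iff.mp ha
    have h0 : a k ≠ 0 := by simpa using hk
    exact Finset.sum_pos' (fun j _ => sq_nonneg _) ⟨k, Finset.mem_univ k, by positivity⟩
  have hrpos : 0 < r := Real.sqrt_pos.mpr hnspos
  have hrne : (r : ℂ) ≠ 0 := Complex.ofReal_ne_zero.mpr hrpos.ne'
  have hr2 : (r : ℝ) ^ 2 = normSq3 a := Real.sq_sqrt hnsnn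
  set B : Matrix (Fin 4) (Fin 4) ℂ := (r : ℂ)⁻¹ • A with hBdef
  have hB : B * B = 1 := by
    rw [hBdef, smul_mul_assoc, mul_smul_comm, alphaDot_sq', smul_smul, smul_smul, ← hr2]
    push_cast
    have h1 : ((r:ℂ))⁻¹ * ((r:ℂ))⁻¹ * ((r:ℂ)) ^ 2 = 1 := by field_simp
    rw [h1, one_smul]
  have hAB : A = (r : ℂ) • B := by
    rw [hBdef, smul_smul, mul_inv_cancel₀ hrne, one_smul]
  -- decompose the argument
  have harg : (Complex.I * (t : ℂ)) • (A - (V : ℂ) • (1 : Matrix (Fin 4) (Fin 4) ℂ)) =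
      ((((r * t : ℝ) : ℂ)) * Complex.I) • B +
        (-(Complex.I * V * t)) • (1 : Matrix (Fin 4) (Fin 4) ℂ) := by
    rw [hAB]
    push_cast
    match_scalars <;> ring
  have hcomm : Commute (((((r * t : ℝ) : ℂ)) * Complex.I) • B)
      ((-(Complex.I * V * t)) • (1 : Matrix (Fin 4) (Fin 4) ℂ)) :=
    ((Commute.one_right _).smul_right _).smul_left _
  have hexp1 : NormedSpace.exp ((-(Complex.I * V * t)) •
      (1 : Matrix (Fin 4) (Fin 4) ℂ)) =
      Complex.exp (-(Complex.I * V * t)) • (1 : Matrix (Fin 4) (Fin 4) ℂ) := by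
    rw [← Algebra.algebraMap_eq_smul_one, ← Algebra.algebraMap_eq_smul_one]
    exact (NormedSpace.algebraMap_exp_comm _).symm.trans (by rw [Complex.exp_eq_exp_ℂ])
  have hexp2 : NormedSpace.exp (((((r * t : ℝ) : ℂ)) * Complex.I) • B) =
      ((Real.cos (r * t) : ℝ) : ℂ) • (1 : Matrix (Fin 4) (Fin 4) ℂ) +
        (Complex.I * ((Real.sin (r * t) / r : ℝ) : ℂ)) • A := by
    rw [exp_smul_sq_one hB, Complex.cosh_mul_I, Complex.sinh_mul_I, hBdef,
      ← Complex.ofReal_cos, ← Complex.ofReal_sin, smul_smul]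
    congr 1
    congr 1
    push_cast
    field_simp
  have hmain : NormedSpace.exp ((Complex.I * (t : ℂ)) •
      (A - (V : ℂ) • (1 : Matrix (Fin 4) (Fin 4) ℂ))) =
      Complex.exp (-(Complex.I) * (V : ℂ) * (t : ℂ)) •
        (((Real.cos (r * t) : ℝ) : ℂ) • (1 : Matrix (Fin 4) (Fin 4) ℂ) +
          (Complex.I * ((Real.sin (r * t) / r : ℝ) : ℂ)) • A) := by
    rw [harg, Matrix.exp_add_of_commute _ _ hcomm, hexp1, hexp2, mul_smul_comm, mul_one]
    have he : Complex.exp (-(Complex.I * (V:ℂ) * (t:ℂ))) =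
        Complex.exp (-(Complex.I) * (V:ℂ) * (t:ℂ)) := by ring_nf
    rw [he]
  refine ⟨hmain, ?_⟩
  -- unitarity
  set X := (Complex.I * (t : ℂ)) • (A - (V : ℂ) • (1 : Matrix (Fin 4) (Fin 4) ℂ)) with hX
  have hXH : Xᴴ = -X := by
    rw [hX, Matrix.conjTranspose_smul, Matrix.conjTranspose_sub, Matrix.conjTranspose_smul,
      Matrix.conjTranspose_one, alphaDot_herm']
    simp [Complex.star_def, _root_.map_mul, Complex.conj_ofReal, ← neg_smul]
    rfl
  rw [Matrix.mem_unitaryGroup_iff]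
  have hstar : star (NormedSpace.exp X) = NormedSpace.exp (-X) :=
    calc star (NormedSpace.exp X) = (NormedSpace.exp X)ᴴ := rfl
      _ = NormedSpace.exp Xᴴ := (Matrix.exp_conjTranspose X).symm
      _ = NormedSpace.exp (-X) := by rw [hXH]
  rw [hstar, ← Matrix.exp_add_of_commute _ _ (Commute.refl X).neg_right, add_neg_cancel,
    NormedSpace.exp_zero]
end

section
/- Let u : ℝ × ℝ³ → ℂ⁴ and v : ℝ × ℝ³ → ℝ³ be continuously differentiable, and let n : ℝ × ℝ³ → ℝ. Suppose u satisfies pointwise the transport equation with purely imaginary zero-order term: ∂ₜu + Σ_{k=1}^3 vₖ ∂_{x_k}u + ½ (Σ_{k=1}^3 ∂_{x_k}vₖ) u = i n u. Then the density ρ := ‖u‖² satisfies the conservation law ∂ₜρ + Σ_{k=1}^3 ∂_{x_k}(vₖ ρ) = 0 at every point. -/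
private lemma hasDerivAt_norm_sq_comp {f : ℝ → ℂ} {f' : ℂ} {t : ℝ}
    (hf : HasDerivAt f f' t) :
    HasDerivAt (fun s => ‖f s‖ ^ 2) (2 * ((starRingEnd ℂ (f t)) * f').re) t := by
  have hre : HasDerivAt (fun s => (f s).re) f'.re t := by
    have := (Complex.reCLM.hasFDerivAt.comp_hasDerivAt t hf)
    simp only [Complex.reCLM_apply, Function.comp_def] at this
    exact this
  have him : HasDerivAt (fun s => (f s).im) f'.im t := by
    have := (Complex.imCLM.hasFDerivAt.comp_hasDerivAt t hf)
    simp only [Complex.imCLM_apply, Function.comp_def] at this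
    exact this
  have h := (hre.fun_mul hre).fun_add (him.fun_mul him)
  have heq : (fun s => ‖f s‖ ^ 2) = fun s => (f s).re * (f s).re + (f s).im * (f s).im := by
    funext s
    rw [← Complex.normSq_apply, ← Complex.sq_norm]
  rw [heq]
  convert h using 1
  · rfl
  · rfl
  simp [Complex.mul_re]
  ring

private lemma alg_key (uj a : ℂ) (b : Fin 3 → ℂ) (c d : Fin 3 → ℝ) (nn : ℝ)
    (h : a + ∑ k, ((c k : ℝ) : ℂ) * b k +
      ((1 / 2 : ℂ) * ((∑ k, d k : ℝ) : ℂ)) * uj = (Complex.I * ((nn : ℝ) : ℂ)) * uj) :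
    2 * ((starRingEnd ℂ uj) * a).re +
      ∑ k, c k * (2 * ((starRingEnd ℂ uj) * b k).re) + (∑ k, d k) * ‖uj‖ ^ 2 = 0 := by
  simp only [Fin.sum_univ_three] at h ⊢
  have h' : a + (((c 0 : ℝ) : ℂ) * b 0 + ((c 1 : ℝ) : ℂ) * b 1 + ((c 2 : ℝ) : ℂ) * b 2) +
      ((((d 0 + d 1 + d 2) / 2 : ℝ)) : ℂ) * uj = (Complex.I * ((nn : ℝ) : ℂ)) * uj := by
    push_cast at h ⊢
    linear_combination h
  have h1 := congrArg Complex.re h'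
  have h2 := congrArg Complex.im h'
  simp only [Complex.add_re, Complex.add_im, Complex.mul_re, Complex.mul_im,
    Complex.ofReal_re, Complex.ofReal_im, Complex.I_re, Complex.I_im] at h1 h2
  have hn : ‖uj‖ ^ 2 = uj.re * uj.re + uj.im * uj.im := by
    rw [← Complex.normSq_apply, ← Complex.sq_norm]
  rw [hn]
  simp only [Complex.mul_re, Complex.conj_re, Complex.conj_im]
  linear_combination 2*uj.re*h1 + 2*uj.im*h2

/-- If `u` solves the transport equation
`∂ₜu + Σₖ vₖ ∂ₖu + ½(Σₖ ∂ₖvₖ) u = i n u` with real `n`, then the density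
`ρ = ‖u‖²` satisfies the conservation law `∂ₜρ + Σₖ ∂ₖ(vₖ ρ) = 0`. -/
theorem transport_equation_density_conservation
    (u : ℝ → (Fin 3 → ℝ) → Fin 4 → ℂ)
    (v : ℝ → (Fin 3 → ℝ) → Fin 3 → ℝ)
    (n : ℝ → (Fin 3 → ℝ) → ℝ)
    (hu : ContDiff ℝ 1 (fun p : ℝ × (Fin 3 → ℝ) => u p.1 p.2))
    (hv : ContDiff ℝ 1 (fun p : ℝ × (Fin 3 → ℝ) => v p.1 p.2))
    (htrans : ∀ t x,
      deriv (fun s => u s x) t +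
        ∑ k, ((v t x k : ℝ) : ℂ) • deriv (fun s => u t (Function.update x k s)) (x k) +
        ((1 / 2 : ℂ) *
          ((∑ k, deriv (fun s => v t (Function.update x k s) k) (x k) : ℝ) : ℂ)) • u t x =
      (Complex.I * ((n t x : ℝ) : ℂ)) • u t x) :
    ∀ t x,
      deriv (fun s => ∑ j, ‖u s x j‖ ^ 2) t +
        ∑ k, deriv (fun s =>
          v t (Function.update x k s) k *
            ∑ j, ‖u t (Function.update x k s) j‖ ^ 2) (x k) = 0 := by
  intro t x
  have hU : Differentiable ℝ (fun p : ℝ × (Fin 3 → ℝ) => u p.1 p.2) := hu.differentiable one_ne_zero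
  have hV : Differentiable ℝ (fun p : ℝ × (Fin 3 → ℝ) => v p.1 p.2) := hv.differentiable one_ne_zero
  have hxx : ∀ k : Fin 3, Function.update x k (x k) = x := fun k => Function.update_eq_self k x
  -- time derivative of u along the curve s ↦ (s, x)
  have hAdiff : DifferentiableAt ℝ (fun s => u s x) t := by
    exact DifferentiableAt.comp (g := fun p : ℝ × (Fin 3 → ℝ) => u p.1 p.2) t (hU (t, x)) (differentiableAt_id.prodMk (differentiableAt_const x) : DifferentiableAt ℝ (fun s : ℝ => (s, x)) t)
  have hA : HasDerivAt (fun s => u s x) (deriv (fun s => u s x) t) t := hAdiff.hasDerivAt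
  -- spatial derivatives of u along the curves s ↦ (t, update x k s)
  have hBdiff : ∀ k : Fin 3,
      DifferentiableAt ℝ (fun s => u t (Function.update x k s)) (x k) := by
    intro k
    exact DifferentiableAt.comp (g := fun p : ℝ × (Fin 3 → ℝ) => u p.1 p.2) (x k) (hU (t, Function.update x k (x k)))
      ((differentiableAt_const t).prodMk (hasDerivAt_update x k (x k)).differentiableAt)
  have hB : ∀ k : Fin 3, HasDerivAt (fun s => u t (Function.update x k s))
      (deriv (fun s => u t (Function.update x k s)) (x k)) (x k) :=
    fun k => (hBdiff k).hasDerivAt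
  -- spatial derivatives of v
  have hVdiff : ∀ k : Fin 3,
      DifferentiableAt ℝ (fun s => v t (Function.update x k s) k) (x k) := by
    intro k
    exact ((ContinuousLinearMap.proj k : (Fin 3 → ℝ) →L[ℝ] ℝ).differentiable.differentiableAt).comp
      (x k) ((DifferentiableAt.comp (g := fun p : ℝ × (Fin 3 → ℝ) => v p.1 p.2) (x k) (hV (t, Function.update x k (x k)))
        ((differentiableAt_const t).prodMk (hasDerivAt_update x k (x k)).differentiableAt)))
  have hVk : ∀ k : Fin 3, HasDerivAt (fun s => v t (Function.update x k s) k)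
      (deriv (fun s => v t (Function.update x k s) k) (x k)) (x k) :=
    fun k => (hVdiff k).hasDerivAt
  -- componentwise derivatives
  have hAj : ∀ j : Fin 4, HasDerivAt (fun s => u s x j)
      (deriv (fun s => u s x) t j) t := by
    intro j
    have := ((ContinuousLinearMap.proj j : (Fin 4 → ℂ) →L[ℝ] ℂ).hasFDerivAt.comp_hasDerivAt t hA)
    simp only [ContinuousLinearMap.proj_apply, Function.comp_def] at this
    exact this
  have hBj : ∀ (k : Fin 3) (j : Fin 4), HasDerivAt (fun s => u t (Function.update x k s) j)
      (deriv (fun s => u t (Function.update x k s)) (x k) j) (x k) := by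
    intro k j
    have := ((ContinuousLinearMap.proj j : (Fin 4 → ℂ) →L[ℝ] ℂ).hasFDerivAt.comp_hasDerivAt (x k) (hB k))
    simp only [ContinuousLinearMap.proj_apply, Function.comp_def] at this
    exact this
  -- derivative of the density in time
  have hρt : HasDerivAt (fun s => ∑ j, ‖u s x j‖ ^ 2)
      (∑ j, 2 * ((starRingEnd ℂ (u t x j)) * (deriv (fun s => u s x) t j)).re) t :=
    HasDerivAt.fun_sum fun j _ => hasDerivAt_norm_sq_comp (hAj j)
  -- derivative of the density in space
  have hρk : ∀ k : Fin 3, HasDerivAt (fun s => ∑ j, ‖u t (Function.update x k s) j‖ ^ 2)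
      (∑ j, 2 * ((starRingEnd ℂ (u t x j)) *
        (deriv (fun s => u t (Function.update x k s)) (x k) j)).re) (x k) := by
    intro k
    have := HasDerivAt.fun_sum (fun (j : Fin 4) (_ : j ∈ Finset.univ) =>
      hasDerivAt_norm_sq_comp (hBj k j))
    simpa [hxx k] using this
  -- derivative of the flux terms
  have hflux : ∀ k : Fin 3, HasDerivAt (fun s =>
      v t (Function.update x k s) k * ∑ j, ‖u t (Function.update x k s) j‖ ^ 2)
      (deriv (fun s => v t (Function.update x k s) k) (x k) * (∑ j, ‖u t x j‖ ^ 2) +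
        v t x k * ∑ j, 2 * ((starRingEnd ℂ (u t x j)) *
          (deriv (fun s => u t (Function.update x k s)) (x k) j)).re) (x k) := by
    intro k
    have := (hVk k).fun_mul (hρk k)
    simpa [hxx k] using this
  -- rewrite the goal using the computed derivatives
  rw [hρt.deriv, Finset.sum_congr rfl (fun k _ => (hflux k).deriv)]
  -- componentwise transport equation
  have hE : ∀ j : Fin 4, deriv (fun s => u s x) t j +
      ∑ k, ((v t x k : ℝ) : ℂ) * (deriv (fun s => u t (Function.update x k s)) (x k) j) +
      ((1 / 2 : ℂ) *
        ((∑ k, deriv (fun s => v t (Function.update x k s) k) (x k) : ℝ) : ℂ)) * u t x j =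
      (Complex.I * ((n t x : ℝ) : ℂ)) * u t x j := by
    intro j
    have := congrFun (htrans t x) j
    simpa [Finset.sum_apply] using this
  have halg : ∀ j : Fin 4,
      2 * ((starRingEnd ℂ (u t x j)) * (deriv (fun s => u s x) t j)).re +
      ∑ k, v t x k * (2 * ((starRingEnd ℂ (u t x j)) *
        (deriv (fun s => u t (Function.update x k s)) (x k) j)).re) +
      (∑ k, deriv (fun s => v t (Function.update x k s) k) (x k)) * ‖u t x j‖ ^ 2 = 0 :=
    fun j => alg_key (u t x j) (deriv (fun s => u s x) t j)
      (fun k => deriv (fun s => u t (Function.update x k s)) (x k) j)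
      (fun k => v t x k) (fun k => deriv (fun s => v t (Function.update x k s) k) (x k))
      (n t x) (hE j)
  have h0 := halg 0
  have h1 := halg 1
  have h2 := halg 2
  have h3 := halg 3
  simp only [Fin.sum_univ_three, Fin.sum_univ_four] at h0 h1 h2 h3 ⊢
  linear_combination h0 + h1 + h2 + h3
end
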